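/- Let L/K be a finite Galois field extension with group Γ. Then the K-algebra map L ⊗_K L → ∏_{γ∈Γ} L sending a ⊗ b to the tuple (a·γ(b))_{γ∈Γ} is an isomorphism of K-algebras. -/

import Mathlib

open scoped TensorProduct

/-- Let `L/K` be a finite Galois field extension with group
`Γ = Gal(L/K)`.  Then the `K`-algebra map `L ⊗_K L → ∏_{γ ∈ Γ} L` sending
`a ⊗ b` to the tuple `(a · γ(b))_{γ ∈ Γ}` is an isomorphism of `K`-algebras. -/
theorem stmt5 (K L : Type*) [Field K] [Field L] [Algebra K L]
    [FiniteDimensional K L] [IsGalois K L]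
    (Φ : L ⊗[K] L →ₐ[K] ((L ≃ₐ[K] L) → L))
    (hΦ : ∀ a b : L, Φ (a ⊗ₜ[K] b) = fun γ : L ≃ₐ[K] L => a * γ b) :
    Function.Bijective Φ := by
  classical
  -- dimension count
  have hcard : Fintype.card (L ≃ₐ[K] L) = Module.finrank K L :=
    Nat.card_eq_fintype_card.symm.trans (IsGalois.card_aut_eq_finrank K L)
  have hdim : Module.finrank K (L ⊗[K] L) = Module.finrank K ((L ≃ₐ[K] L) → L) := by
    rw [Module.finrank_tensorProduct, Module.finrank_pi_fintype,
      Finset.sum_const, Finset.card_univ, hcard, smul_eq_mul]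
  -- linear independence of characters
  have hli : LinearIndependent L (fun γ : L ≃ₐ[K] L => (γ : L → L)) := by
    have h1 : LinearIndependent L (M := L → L)
        (fun f => f : (L →* L) → L → L) := linearIndependent_monoidHom L L
    have h2 : Function.Injective (fun γ : L ≃ₐ[K] L => (γ : L →* L)) := by
      intro γ₁ γ₂ h
      ext x
      exact DFunLike.congr_fun h x
    exact h1.comp _ h2
  -- the span of the tuples `(γ b)_γ` over `L` is everything
  set S : Submodule L ((L ≃ₐ[K] L) → L) :=
    Submodule.span L (Set.range fun b : L => fun γ : L ≃ₐ[K] L => γ b) with hSdef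
  have hS : S = ⊤ := by
    by_contra h
    obtain ⟨f, hf0, hf⟩ :=
      Submodule.exists_dual_map_eq_bot_of_lt_top (lt_top_iff_ne_top.mpr h)
        (inferInstance : Module.Projective L (((L ≃ₐ[K] L) → L) ⧸ S))
    have hfS : ∀ x ∈ S, f x = 0 := by
      intro x hx
      have : f x ∈ S.map f := Submodule.mem_map_of_mem hx
      rwa [hf, Submodule.mem_bot] at this
    set c : (L ≃ₐ[K] L) → L := fun γ => f (Pi.single γ (1:L) : (L ≃ₐ[K] L) → L) with hc
    have hfx : ∀ x : (L ≃ₐ[K] L) → L, f x = ∑ γ, x γ * c γ := by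
      intro x
      have hx : x = ∑ γ, x γ • (Pi.single γ (1:L) : (L ≃ₐ[K] L) → L) := by
        ext δ
        simp [Pi.single_apply, Finset.sum_apply]
      conv_lhs => rw [hx]
      simp [hc, Finset.sum_apply, mul_comm]
    have hzero : ∀ γ, c γ = 0 := by
      have hsum : ∑ γ, c γ • (γ : L → L) = 0 := by
        funext b
        have hb : f (fun γ : L ≃ₐ[K] L => γ b) = 0 :=
          hfS _ (Submodule.subset_span ⟨b, rfl⟩)
        rw [hfx] at hb
        simpa [Finset.sum_apply, mul_comm] using hb
      exact Fintype.linearIndependent_iff.mp hli _ hsum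
    apply hf0
    ext x
    simp [hfx, hzero]
  -- surjectivity
  have hsurj : Function.Surjective Φ := by
    intro x
    have hx : x ∈ S := hS ▸ Submodule.mem_top
    refine Submodule.span_induction ?_ ?_ ?_ ?_ hx
    · rintro _ ⟨b, rfl⟩
      exact ⟨1 ⊗ₜ b, by rw [hΦ]; simp⟩
    · exact ⟨0, map_zero Φ⟩
    · rintro y z - - ⟨ty, hty⟩ ⟨tz, htz⟩
      exact ⟨ty + tz, by rw [map_add, hty, htz]⟩
    · rintro a y - ⟨t, ht⟩
      refine ⟨(a ⊗ₜ 1) * t, ?_⟩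
      rw [map_mul, ht, hΦ]
      funext γ
      simp [Pi.smul_apply, smul_eq_mul]
  exact ⟨(LinearMap.injective_iff_surjective_of_finrank_eq_finrank hdim
    (f := Φ.toLinearMap)).mpr hsurj, hsurj⟩
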